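/- The coefficient of x₁^{k−1} x₂^{k−1} ⋯ x_k^{k−1} in the polynomial ∏_{i=1}^k ∏_{j≠i} (x_i − x_j) (product over ordered pairs i ≠ j in {1,…,k}) equals k!. -/

import Mathlib

open Finset MvPolynomial

private lemma split_prod' {F : Type*} [Field F] (k : ℕ) :
    (∏ i : Fin k, ∏ j ∈ Finset.univ.erase i, (X i - X j) : MvPolynomial (Fin k) F) =
    (∏ i : Fin k, ∏ j ∈ Ioi i, ((X j : MvPolynomial (Fin k) F) - X i)) *
    (∏ i : Fin k, ∏ j ∈ Ioi i, ((X (Fin.rev j) : MvPolynomial (Fin k) F) - X (Fin.rev i))) := by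
  have herase : ∀ i : Fin k, Finset.univ.erase i = Ioi i ∪ Iio i := by
    intro i; ext j
    simp only [mem_erase, mem_union, mem_Ioi, mem_Iio, mem_univ, and_true]
    rw [ne_comm, ne_iff_lt_or_gt]
  have hB : (∏ i : Fin k, ∏ j ∈ Ioi i, ((X (Fin.rev j) : MvPolynomial (Fin k) F) - X (Fin.rev i)))
      = ∏ i : Fin k, ∏ j ∈ Iio i, ((X j : MvPolynomial (Fin k) F) - X i) := by
    rw [← Equiv.prod_comp Fin.revPerm
      (fun i => ∏ j ∈ Iio i, ((X j : MvPolynomial (Fin k) F) - X i))]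
    refine Finset.prod_congr rfl fun i _ => ?_
    refine Finset.prod_nbij' Fin.rev Fin.rev ?_ ?_ ?_ ?_ ?_ <;>
      simp [Fin.rev_lt_rev, Fin.lt_rev_iff]
  rw [hB]
  have h1 : ∀ i : Fin k, (∏ j ∈ Finset.univ.erase i, (X i - X j) : MvPolynomial (Fin k) F)
      = (∏ j ∈ Ioi i, (X i - X j)) * ∏ j ∈ Iio i, (X i - X j) := by
    intro i
    rw [herase, Finset.prod_union]
    simp only [Finset.disjoint_left, mem_Ioi, mem_Iio]
    exact fun a h => asymm h
  rw [Finset.prod_congr rfl fun i _ => h1 i, Finset.prod_mul_distrib, mul_comm]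
  congr 1
  · exact Finset.prod_comm' (fun x y => by simp)
  · exact Finset.prod_comm' (fun x y => by simp)

private lemma prod_pow_eq_mon' {F : Type*} [Field F] {k : ℕ} (e : Fin k → ℕ) :
    (∏ i : Fin k, (X i : MvPolynomial (Fin k) F) ^ e i) =
      monomial (Finsupp.equivFunOnFinite.symm e) 1 := by
  rw [← prod_X_pow_eq_monomial]
  refine (Finset.prod_subset (Finset.subset_univ _) ?_).symm
  intro x _ hx
  simp only [Finsupp.mem_support_iff, ne_eq, not_not,
    Finsupp.coe_equivFunOnFinite_symm] at hx ⊢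
  simp [hx]

private lemma vdet' {F : Type*} [Field F] {k : ℕ} (g : Equiv.Perm (Fin k)) :
    (Matrix.vandermonde (fun i : Fin k => (X (g i) : MvPolynomial (Fin k) F))).det =
      ∑ σ : Equiv.Perm (Fin k),
        ((Equiv.Perm.sign σ : ℤ) : MvPolynomial (Fin k) F) *
          monomial (Finsupp.equivFunOnFinite.symm
            (fun j => ((σ.symm (g.symm j) : Fin k) : ℕ))) 1 := by
  rw [Matrix.det_apply']
  refine Finset.sum_congr rfl fun σ _ => ?_
  congr 1
  rw [← prod_pow_eq_mon']
  rw [← Equiv.prod_comp (σ.trans g)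
    (fun j => (X j : MvPolynomial (Fin k) F) ^ ((σ.symm (g.symm j) : Fin k) : ℕ))]
  refine Finset.prod_congr rfl fun i _ => ?_
  simp [Matrix.vandermonde_apply]

private lemma perm_cond' {k : ℕ} (σ τ : Equiv.Perm (Fin k)) :
    (∀ j, τ.symm (Fin.rev j) = Fin.rev (σ.symm j)) ↔
      τ = Fin.revPerm * σ * Fin.revPerm := by
  constructor
  · intro h; ext x
    have h2 := h (σ (Fin.rev x))
    simp only [Equiv.symm_apply_apply, Fin.rev_rev] at h2
    have := (Equiv.symm_apply_eq τ).mp h2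
    simp [Equiv.Perm.mul_apply, ← this]
  · intro h j; subst h
    have hr : (Fin.revPerm (n := k))⁻¹ = Fin.revPerm := rfl
    simp [← Equiv.Perm.inv_def, mul_inv_rev, Equiv.Perm.mul_apply, hr, Fin.rev_rev]

private lemma sign_conj_rev' {k : ℕ} (σ : Equiv.Perm (Fin k)) :
    Equiv.Perm.sign (Fin.revPerm * σ * Fin.revPerm) = Equiv.Perm.sign σ := by
  rw [map_mul, map_mul, mul_assoc, mul_comm (Equiv.Perm.sign σ), ← mul_assoc,
    Int.units_mul_self, one_mul]

private lemma fin_add_rev_iff' {k : ℕ} (a b : Fin k) :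
    (a : ℕ) + (b : ℕ) = k - 1 ↔ b = Fin.rev a := by
  rw [Fin.ext_iff, Fin.val_rev]
  have := a.isLt; have := b.isLt
  omega

theorem coeff_prod_differences {F : Type*} [Field F] [CharZero F] (k : ℕ) :
    MvPolynomial.coeff (Finsupp.equivFunOnFinite.symm fun _ : Fin k => k - 1)
        (∏ i : Fin k, ∏ j ∈ Finset.univ.erase i, (X i - X j) : MvPolynomial (Fin k) F) =
      (Nat.factorial k : F) := by
  classical
  set d : Fin k →₀ ℕ := Finsupp.equivFunOnFinite.symm fun _ : Fin k => k - 1 with hd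
  have hV : (∏ i : Fin k, ∏ j ∈ Ioi i, ((X j : MvPolynomial (Fin k) F) - X i)) =
      (Matrix.vandermonde fun i : Fin k =>
        (X ((Equiv.refl (Fin k)) i) : MvPolynomial (Fin k) F)).det :=
    (Matrix.det_vandermonde _).symm
  have hW : (∏ i : Fin k, ∏ j ∈ Ioi i,
        ((X (Fin.rev j) : MvPolynomial (Fin k) F) - X (Fin.rev i))) =
      (Matrix.vandermonde fun i : Fin k =>
        (X (Fin.revPerm i) : MvPolynomial (Fin k) F)).det :=
    (Matrix.det_vandermonde _).symm
  rw [split_prod', hV, hW, vdet' (Equiv.refl (Fin k)), vdet' Fin.revPerm,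
    Finset.sum_mul_sum]
  have hterm : ∀ σ τ : Equiv.Perm (Fin k),
      coeff d ((((Equiv.Perm.sign σ : ℤ) : MvPolynomial (Fin k) F) *
          monomial (Finsupp.equivFunOnFinite.symm
            (fun j => ((σ.symm ((Equiv.refl (Fin k)).symm j) : Fin k) : ℕ))) 1) *
        (((Equiv.Perm.sign τ : ℤ) : MvPolynomial (Fin k) F) *
          monomial (Finsupp.equivFunOnFinite.symm
            (fun j => ((τ.symm (Fin.revPerm.symm j) : Fin k) : ℕ))) 1)) =
      if τ = Fin.revPerm * σ * Fin.revPerm then (1 : F) else 0 := by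
    intro σ τ
    rw [mul_mul_mul_comm, monomial_mul, mul_one, ← Int.cast_mul,
      ← map_intCast (C : F →+* MvPolynomial (Fin k) F), coeff_C_mul, coeff_monomial]
    have hcond : (Finsupp.equivFunOnFinite.symm
            (fun j => ((σ.symm ((Equiv.refl (Fin k)).symm j) : Fin k) : ℕ)) +
          Finsupp.equivFunOnFinite.symm
            (fun j => ((τ.symm (Fin.revPerm.symm j) : Fin k) : ℕ)) = d) ↔
        τ = Fin.revPerm * σ * Fin.revPerm := by
      rw [← perm_cond' σ τ, DFunLike.ext_iff]
      apply forall_congr'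
      intro j
      simp only [Finsupp.add_apply, Finsupp.coe_equivFunOnFinite_symm, hd,
        Equiv.refl_symm, Equiv.refl_apply, Fin.revPerm_symm, Fin.revPerm_apply]
      exact fin_add_rev_iff' _ _
    by_cases h : τ = Fin.revPerm * σ * Fin.revPerm
    · rw [if_pos (hcond.mpr h), if_pos h, mul_one, h, sign_conj_rev',
        ← Units.val_mul, Int.units_mul_self, Units.val_one, Int.cast_one]
    · rw [if_neg (fun hc => h (hcond.mp hc)), if_neg h, mul_zero]
  calc coeff d (∑ σ : Equiv.Perm (Fin k), ∑ τ : Equiv.Perm (Fin k), _) =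
      ∑ σ : Equiv.Perm (Fin k), ∑ τ : Equiv.Perm (Fin k),
        (if τ = Fin.revPerm * σ * Fin.revPerm then (1 : F) else 0) := by
        rw [coeff_sum]
        exact Finset.sum_congr rfl fun σ _ => by
          rw [coeff_sum]
          exact Finset.sum_congr rfl fun τ _ => hterm σ τ
    _ = ∑ _σ : Equiv.Perm (Fin k), (1 : F) := by
        refine Finset.sum_congr rfl fun σ _ => ?_
        rw [Finset.sum_ite_eq' Finset.univ (Fin.revPerm * σ * Fin.revPerm)
          (fun _ => (1 : F)), if_pos (Finset.mem_univ _)]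
    _ = (Nat.factorial k : F) := by
        simp [Finset.card_univ, Fintype.card_perm]
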